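/- Let U : H^{P_O} ⊗ H^{A_O} ⊗ H^{B_O} → H^{F_I} ⊗ H^{A_I} ⊗ H^{B_I} be a unitary admitting a factorization |U⟩⟩ = |U₁⟩⟩ * |𝟙⟩⟩^{ZZ̄} * |U₂⟩⟩ with unitaries U₁ : H^{A_O} ⊗ H^{P_O} → H^{B_I} ⊗ H^Z and U₂ : H^{B_O} ⊗ H^{Z̄} → H^{A_I} ⊗ H^{F_I}, where H^Z and H^{Z̄} are isomorphic finite-dimensional spaces. Let U_B : H^{B_I} ⊗ H^{B_I'} → H^{B_O} ⊗ H^{B_O'} be unitary, and let ω₁ : H^{B_I'} ⊗ H^{P_O} → H^{A_I} ⊗ H^E and ω₂ : H^{A_O} ⊗ H^E → H^{B_O'} ⊗ H^{F_I} be linear maps satisfying |ω₁⟩⟩ * |ω₂⟩⟩ = |U⟩⟩ * |U_B⟩⟩ (contracting H^E on the left and H^{B_I}, H^{B_O} on the right). Then |U₁†⟩⟩ * (|ω₁⟩⟩ * |ω₂⟩⟩) * |U₂†⟩⟩ = |U_B⟩⟩ ⊗ |𝟙⟩⟩^{ZZ̄}, where the outer link products contract H^{A_O}, H^{P_O} and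 H^{A_I}, H^{F_I} respectively. -/

import Mathlib

open Matrix

/-- let `U : H^{P_O} ⊗ H^{A_O} ⊗ H^{B_O} → H^{F_I} ⊗ H^{A_I} ⊗ H^{B_I}` be a
unitary admitting a factorization `|U⟩⟩ = |U₁⟩⟩ * |𝟙⟩⟩^{ZZ̄} * |U₂⟩⟩` with unitaries
`U₁ : H^{A_O} ⊗ H^{P_O} → H^{B_I} ⊗ H^Z` and `U₂ : H^{B_O} ⊗ H^{Z̄} → H^{A_I} ⊗ H^{F_I}`.
Let `U_B : H^{B_I} ⊗ H^{B_I'} → H^{B_O} ⊗ H^{B_O'}` be unitary and let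
`ω₁ : H^{B_I'} ⊗ H^{P_O} → H^{A_I} ⊗ H^E`, `ω₂ : H^{A_O} ⊗ H^E → H^{B_O'} ⊗ H^{F_I}` be
linear maps with `|ω₁⟩⟩ * |ω₂⟩⟩ = |U⟩⟩ * |U_B⟩⟩` (contracting `H^E` on the left, and
`H^{B_I}`, `H^{B_O}` on the right). Then
`|U₁†⟩⟩ * (|ω₁⟩⟩ * |ω₂⟩⟩) * |U₂†⟩⟩ = |U_B⟩⟩ ⊗ |𝟙⟩⟩^{ZZ̄}`, where the outer link products
contract `H^{A_O}, H^{P_O}` and `H^{A_I}, H^{F_I}` respectively.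

All spaces carry fixed computational bases; maps are represented by matrices (output
index first), pure Choi vectors by their matrix entries, and link products by sums over
the contracted computational-basis indices. `H^Z` and `H^{Z̄}` being isomorphic with
canonical basis identification, they are modelled by a common index type `Z`. -/
theorem bipartite_time_delocalised_subsystems
    {pO aO bO fI aI bI bI' bO' Z E : Type*}
    [Fintype pO] [Fintype aO] [Fintype bO] [Fintype fI] [Fintype aI] [Fintype bI]
    [Fintype bI'] [Fintype bO'] [Fintype Z] [Fintype E]
    [DecidableEq pO] [DecidableEq aO] [DecidableEq bO] [DecidableEq fI]
    [DecidableEq aI] [DecidableEq bI] [DecidableEq bI'] [DecidableEq bO'] [DecidableEq Z]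
    (U : Matrix (fI × aI × bI) (pO × aO × bO) ℂ)
    (hU₁ : Uᴴ * U = 1) (hU₂ : U * Uᴴ = 1)
    (U₁ : Matrix (bI × Z) (aO × pO) ℂ)
    (hU₁₁ : U₁ᴴ * U₁ = 1) (hU₁₂ : U₁ * U₁ᴴ = 1)
    (U₂ : Matrix (aI × fI) (bO × Z) ℂ)
    (hU₂₁ : U₂ᴴ * U₂ = 1) (hU₂₂ : U₂ * U₂ᴴ = 1)
    (hdecomp : ∀ (f : fI) (ai : aI) (bi : bI) (p : pO) (ao : aO) (bo : bO),
      U (f, ai, bi) (p, ao, bo) = ∑ z : Z, U₁ (bi, z) (ao, p) * U₂ (ai, f) (bo, z))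
    (UB : Matrix (bO × bO') (bI × bI') ℂ)
    (hUB₁ : UBᴴ * UB = 1) (hUB₂ : UB * UBᴴ = 1)
    (ω₁ : Matrix (aI × E) (bI' × pO) ℂ) (ω₂ : Matrix (bO' × fI) (aO × E) ℂ)
    (hω : ∀ (bi' : bI') (p : pO) (ai : aI) (ao : aO) (bo' : bO') (f : fI),
      (∑ e : E, ω₁ (ai, e) (bi', p) * ω₂ (bo', f) (ao, e)) =
        ∑ bi : bI, ∑ bo : bO, U (f, ai, bi) (p, ao, bo) * UB (bo, bo') (bi, bi')) :
    ∀ (bi : bI) (z : Z) (bi' : bI') (bo : bO) (z' : Z) (bo' : bO'),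
      (∑ ao : aO, ∑ p : pO, ∑ ai : aI, ∑ f : fI,
          star (U₁ (bi, z) (ao, p))
            * (∑ e : E, ω₁ (ai, e) (bi', p) * ω₂ (bo', f) (ao, e))
            * star (U₂ (ai, f) (bo, z')))
        = UB (bo, bo') (bi, bi') * (if z = z' then 1 else 0) := by
  intro bi z bi' bo z' bo'
  classical
  set W : Matrix (aI × fI) (aO × pO) ℂ :=
    fun x y => ∑ e : E, ω₁ (x.1, e) (bi', y.2) * ω₂ (bo', x.2) (y.1, e) with hWdef
  set N : Matrix (bO × Z) (bI × Z) ℂ :=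
    fun x y => if x.2 = y.2 then UB (x.1, bo') (y.1, bi') else 0 with hNdef
  have hW : W = U₂ * N * U₁ := by
    ext ⟨ai, f⟩ ⟨ao, p⟩
    show (∑ e : E, ω₁ (ai, e) (bi', p) * ω₂ (bo', f) (ao, e)) = (U₂ * N * U₁) (ai, f) (ao, p)
    rw [hω bi' p ai ao bo' f]
    simp only [hdecomp, Matrix.mul_apply, Fintype.sum_prod_type, hNdef,
      Finset.sum_mul, Finset.mul_sum, ite_mul, zero_mul, mul_ite, mul_zero]
    refine Finset.sum_congr rfl fun bi₀ _ => ?_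
    erw [Finset.sum_congr rfl fun y _ => congrArg (· * U₁ (bi₀, y) (ao, p)) (Matrix.mul_apply (M := U₂) (N := N) (i := (ai, f)) (k := (bi₀, y)))]
    simp only [hNdef, Fintype.sum_prod_type, Finset.sum_mul, ite_mul, zero_mul, mul_ite, mul_zero, Finset.sum_ite_eq', Finset.mem_univ, if_true]
    rw [Finset.sum_comm]
    refine Finset.sum_congr rfl fun z₀ _ => ?_
    refine Finset.sum_congr rfl fun bo₀ _ => ?_
    ring
  have hEq : U₂ᴴ * W * U₁ᴴ = N := by
    rw [hW]
    have : U₂ᴴ * (U₂ * N * U₁) * U₁ᴴ = U₂ᴴ * U₂ * N * (U₁ * U₁ᴴ) := by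
      simp only [Matrix.mul_assoc]
    rw [this, hU₂₁, hU₁₂, Matrix.one_mul, Matrix.mul_one]
  have hentry := congrFun (congrFun hEq (bo, z')) (bi, z)
  have hLHS : (∑ ao : aO, ∑ p : pO, ∑ ai : aI, ∑ f : fI,
      star (U₁ (bi, z) (ao, p))
        * (∑ e : E, ω₁ (ai, e) (bi', p) * ω₂ (bo', f) (ao, e))
        * star (U₂ (ai, f) (bo, z')))
      = (U₂ᴴ * W * U₁ᴴ) (bo, z') (bi, z) := by
    simp_rw [Matrix.mul_apply, Matrix.conjTranspose_apply, Fintype.sum_prod_type,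
      Finset.sum_mul]
    refine Finset.sum_congr rfl fun ao _ => ?_
    refine Finset.sum_congr rfl fun p _ => ?_
    refine Finset.sum_congr rfl fun ai _ => ?_
    refine Finset.sum_congr rfl fun f _ => ?_
    show star (U₁ (bi, z) (ao, p)) * _ * star (U₂ (ai, f) (bo, z')) =
      star (U₂ (ai, f) (bo, z')) *
        (∑ e : E, ω₁ (ai, e) (bi', p) * ω₂ (bo', f) (ao, e)) * star (U₁ (bi, z) (ao, p))
    ring
  rw [hLHS, hentry, hNdef]
  by_cases h : z' = z
  · subst h; simp
  · simp [h, Ne.symm h]
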